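/- Let K₃(Σ) = π/(2√3) + (1/6)·[6·(Σ³+1)^{1/3} + 2·log((Σ³+1)^{1/3} − 1) − log((Σ³+1)^{2/3} + (Σ³+1)^{1/3} + 1) − 2√3·arctan((2·(Σ³+1)^{1/3} + 1)/√3)]. Then the function Σ ↦ K₃(Σ) − Σ + 1/(6Σ²) − 1/(45Σ⁵) is O(Σ^{−7}) as Σ → ∞ (with respect to the filter at infinity on ℝ). -/

import Mathlib

open Filter Asymptotics

/-- The Kähler potential of the Ricci-flat Kähler metric on `O_{P²}(-3)`, as a function of
the invariant `Σ = |z₁|² + |z₂|² + |z₃|²`. -/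
noncomputable def K₃ (S : ℝ) : ℝ :=
  Real.pi / (2 * Real.sqrt 3) + (1 / 6) *
    (6 * (S ^ 3 + 1) ^ ((1 : ℝ) / 3)
      + 2 * Real.log ((S ^ 3 + 1) ^ ((1 : ℝ) / 3) - 1)
      - Real.log ((S ^ 3 + 1) ^ ((2 : ℝ) / 3) + (S ^ 3 + 1) ^ ((1 : ℝ) / 3) + 1)
      - 2 * Real.sqrt 3 *
          Real.arctan ((2 * (S ^ 3 + 1) ^ ((1 : ℝ) / 3) + 1) / Real.sqrt 3))

open Real Filter Asymptotics Topology

theorem hK₃deriv (S : ℝ) (hS : 0 < S) :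
    HasDerivAt (fun S : ℝ => Real.pi / (2 * Real.sqrt 3) + (1 / 6) *
    (6 * (S ^ 3 + 1) ^ ((1 : ℝ) / 3)
      + 2 * Real.log ((S ^ 3 + 1) ^ ((1 : ℝ) / 3) - 1)
      - Real.log ((S ^ 3 + 1) ^ ((2 : ℝ) / 3) + (S ^ 3 + 1) ^ ((1 : ℝ) / 3) + 1)
      - 2 * Real.sqrt 3 *
          Real.arctan ((2 * (S ^ 3 + 1) ^ ((1 : ℝ) / 3) + 1) / Real.sqrt 3)))
    ((S ^ 3 + 1) ^ ((1 : ℝ) / 3) / S) S := by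
  have hP : (0:ℝ) < S ^ 3 + 1 := by positivity
  set u : ℝ := (S ^ 3 + 1) ^ ((1 : ℝ) / 3) with hu
  have hu3 : u ^ 3 = S ^ 3 + 1 := by
    rw [hu, ← Real.rpow_natCast ((S^3+1) ^ ((1:ℝ)/3)) 3, ← Real.rpow_mul hP.le]
    norm_num
  have hu2 : (S ^ 3 + 1) ^ ((2 : ℝ) / 3) = u ^ 2 := by
    rw [hu, ← Real.rpow_natCast ((S^3+1) ^ ((1:ℝ)/3)) 2, ← Real.rpow_mul hP.le]
    norm_num
  have hu1 : 1 < u := by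
    rw [hu, Real.one_lt_rpow_iff_of_pos hP]
    exact Or.inl ⟨by nlinarith [pow_pos hS 3], by norm_num⟩
  have hu0 : 0 < u := by linarith
  have hm1 : (S ^ 3 + 1) ^ ((1:ℝ) / 3 - 1) = 1 / u ^ 2 := by
    rw [Real.rpow_sub hP, Real.rpow_one, ← hu, ← hu3]
    field_simp
  have hm2 : (S ^ 3 + 1) ^ ((2:ℝ) / 3 - 1) = 1 / u := by
    rw [Real.rpow_sub hP, Real.rpow_one, hu2, ← hu3]
    field_simp
  have hP' : HasDerivAt (fun S : ℝ => S ^ 3 + 1) (3 * S ^ 2) S := by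
    simpa using (hasDerivAt_pow 3 S).add_const 1
  have hu'' : HasDerivAt (fun S : ℝ => (S ^ 3 + 1) ^ ((1:ℝ)/3)) (S ^ 2 / u ^ 2) S := by
    have := (Real.hasDerivAt_rpow_const (p := (1:ℝ)/3) (Or.inl hP.ne')).comp S hP'
    refine this.congr_deriv ?_
    rw [hm1]; field_simp
  have hu2' : HasDerivAt (fun S : ℝ => (S ^ 3 + 1) ^ ((2:ℝ)/3)) (2 * S ^ 2 / u) S := by
    have := (Real.hasDerivAt_rpow_const (p := (2:ℝ)/3) (Or.inl hP.ne')).comp S hP'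
    refine this.congr_deriv ?_
    rw [hm2]; field_simp
  have hne1 : u - 1 ≠ 0 := by linarith
  have hlog1 : HasDerivAt (fun S : ℝ => Real.log ((S ^ 3 + 1) ^ ((1:ℝ)/3) - 1))
      ((S ^ 2 / u ^ 2) / (u - 1)) S := (hu''.sub_const 1).log hne1
  have hden2 : (0:ℝ) < u ^ 2 + u + 1 := by positivity
  have hlog2 : HasDerivAt (fun S : ℝ => Real.log ((S ^ 3 + 1) ^ ((2:ℝ)/3) + (S ^ 3 + 1) ^ ((1:ℝ)/3) + 1))
      ((2 * S ^ 2 / u + S ^ 2 / u ^ 2) / (u ^ 2 + u + 1)) S := by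
    have h := ((hu2'.add hu'').add_const 1).log (by simp only [Pi.add_apply]; rw [hu2, ← hu]; exact hden2.ne')
    simp only [Pi.add_apply] at h
    rw [hu2, ← hu] at h
    exact h
  have harc : HasDerivAt (fun S : ℝ => Real.arctan ((2 * (S ^ 3 + 1) ^ ((1:ℝ)/3) + 1) / Real.sqrt 3))
      ((2 * (S ^ 2 / u ^ 2) / Real.sqrt 3) / (1 + ((2 * u + 1) / Real.sqrt 3) ^ 2)) S := by
    have h := (((hu''.const_mul 2).add_const 1).div_const (Real.sqrt 3)).arctan
    rw [← hu] at h
    convert h using 1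
    ring
  have hK : HasDerivAt (fun S : ℝ => Real.pi / (2 * Real.sqrt 3) + (1 / 6) *
    (6 * (S ^ 3 + 1) ^ ((1 : ℝ) / 3)
      + 2 * Real.log ((S ^ 3 + 1) ^ ((1 : ℝ) / 3) - 1)
      - Real.log ((S ^ 3 + 1) ^ ((2 : ℝ) / 3) + (S ^ 3 + 1) ^ ((1 : ℝ) / 3) + 1)
      - 2 * Real.sqrt 3 *
          Real.arctan ((2 * (S ^ 3 + 1) ^ ((1 : ℝ) / 3) + 1) / Real.sqrt 3)))
    ((1/6) * (6 * (S ^ 2 / u ^ 2) + 2 * ((S ^ 2 / u ^ 2) / (u - 1))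
      - (2 * S ^ 2 / u + S ^ 2 / u ^ 2) / (u ^ 2 + u + 1)
      - 2 * Real.sqrt 3 * ((2 * (S ^ 2 / u ^ 2) / Real.sqrt 3) / (1 + ((2 * u + 1) / Real.sqrt 3) ^ 2)))) S := by
    exact ((((hu''.const_mul 6).add (hlog1.const_mul 2)).sub hlog2).sub
      (harc.const_mul (2 * Real.sqrt 3))).const_mul (1/6) |>.const_add _
  have heq : (1/6) * (6 * (S ^ 2 / u ^ 2) + 2 * ((S ^ 2 / u ^ 2) / (u - 1))
      - (2 * S ^ 2 / u + S ^ 2 / u ^ 2) / (u ^ 2 + u + 1)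
      - 2 * Real.sqrt 3 * ((2 * (S ^ 2 / u ^ 2) / Real.sqrt 3) / (1 + ((2 * u + 1) / Real.sqrt 3) ^ 2)))
      = u / S := by
    have h3 : Real.sqrt 3 ^ 2 = 3 := Real.sq_sqrt (by norm_num)
    have hs3 : Real.sqrt 3 ≠ 0 := by positivity
    have hS0 : S ≠ 0 := hS.ne'
    have hu30 : u ^ 3 - 1 = S ^ 3 := by linarith
    have h4 : (1 + ((2 * u + 1) / Real.sqrt 3) ^ 2) = (4 * (u ^ 2 + u + 1)) / 3 := by
      rw [div_pow, h3]; field_simp; ring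
    rw [h4]
    have key : (1/6:ℝ) * (6 * (S ^ 2 / u ^ 2) + 2 * (S ^ 2 / u ^ 2 / (u - 1))
        - (2 * S ^ 2 / u + S ^ 2 / u ^ 2) / (u ^ 2 + u + 1)
        - 2 * Real.sqrt 3 * (2 * (S ^ 2 / u ^ 2) / Real.sqrt 3 / ((4 * (u ^ 2 + u + 1)) / 3)))
        = (S ^ 2 / u ^ 2) * (u ^ 3 / (u ^ 3 - 1)) := by
      have hne3 : u ^ 3 - 1 ≠ 0 := by nlinarith
      field_simp
      ring
    rw [key, hu30]
    field_simp
  rw [← heq]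
  convert hK using 1

theorem hFderiv (S : ℝ) (hS : 0 < S) :
    HasDerivAt (fun S : ℝ => K₃ S - S + 1 / (6 * S ^ 2) - 1 / (45 * S ^ 5))
      ((S ^ 3 + 1) ^ ((1 : ℝ) / 3) / S - 1 - 1 / (3 * S ^ 3) + 1 / (9 * S ^ 6)) S := by
  have hK : HasDerivAt K₃ ((S ^ 3 + 1) ^ ((1 : ℝ) / 3) / S) S := hK₃deriv S hS
  have h1 : HasDerivAt (fun S : ℝ => 1 / (6 * S ^ 2)) (-(1 / (3 * S ^ 3))) S := by
    have h := ((hasDerivAt_pow 2 S).const_mul 6).inv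
      (mul_ne_zero (by norm_num) (pow_ne_zero 2 hS.ne'))
    simp only [one_div]
    refine h.congr_deriv ?_
    field_simp
    ring
  have h2 : HasDerivAt (fun S : ℝ => 1 / (45 * S ^ 5)) (-(1 / (9 * S ^ 6))) S := by
    have h := ((hasDerivAt_pow 5 S).const_mul 45).inv
      (mul_ne_zero (by norm_num) (pow_ne_zero 5 hS.ne'))
    simp only [one_div]
    refine h.congr_deriv ?_
    field_simp
    ring
  have h := ((hK.sub (hasDerivAt_id S)).add h1).sub h2
  refine h.congr_deriv ?_
  simp [id]
  ring


theorem hbound (S : ℝ) (hS : 1 ≤ S) :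
    0 ≤ (S ^ 3 + 1) ^ ((1 : ℝ) / 3) / S - 1 - 1 / (3 * S ^ 3) + 1 / (9 * S ^ 6) ∧
    (S ^ 3 + 1) ^ ((1 : ℝ) / 3) / S - 1 - 1 / (3 * S ^ 3) + 1 / (9 * S ^ 6) ≤ 1 / S ^ 9 := by
  have hS0 : 0 < S := lt_of_lt_of_le one_pos hS
  have hP : (0:ℝ) < S ^ 3 + 1 := by positivity
  set u : ℝ := (S ^ 3 + 1) ^ ((1 : ℝ) / 3) with hu
  have hu3 : u ^ 3 = S ^ 3 + 1 := by
    rw [hu, ← Real.rpow_natCast ((S^3+1) ^ ((1:ℝ)/3)) 3, ← Real.rpow_mul hP.le]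
    norm_num
  have hu0 : 0 < u := Real.rpow_pos_of_pos hP _
  set w : ℝ := u / S with hwdef
  set ε : ℝ := 1 / S ^ 3 with hedef
  have hε0 : 0 < ε := by positivity
  have hε1 : ε ≤ 1 := by
    rw [hedef, div_le_one (by positivity)]
    nlinarith [pow_le_pow_left₀ (zero_le_one (α := ℝ)) hS 3]
  have hw3 : w ^ 3 = 1 + ε := by
    rw [hwdef, hedef, div_pow, hu3]
    field_simp
  have hw1 : 1 ≤ w := by
    have hw0 : 0 < w := by positivity
    nlinarith [sq_nonneg (w - 1), sq_nonneg (w + 1)]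
  set a : ℝ := 1 + ε / 3 - ε ^ 2 / 9 with hadef
  have ha1 : 1 ≤ a := by rw [hadef]; nlinarith
  clear_value u w ε a
  have e5le : ε ^ 5 ≤ ε ^ 3 := pow_le_pow_of_le_one hε0.le hε1 (by norm_num)
  have e6le : ε ^ 6 ≤ ε ^ 5 := pow_le_pow_of_le_one hε0.le hε1 (by norm_num)
  have hc1 : 0 ≤ w ^ 3 - a ^ 3 := by
    rw [hw3, hadef]
    nlinarith [e5le, pow_nonneg hε0.le 6, pow_nonneg hε0.le 3]
  have hc2 : w ^ 3 - a ^ 3 ≤ 5 / 27 * ε ^ 3 := by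
    rw [hw3, hadef]
    nlinarith [e6le, pow_nonneg hε0.le 5]
  have hwa : a ≤ w :=
    le_of_pow_le_pow_left₀ (n := 3) (by norm_num) (by linarith) (by linarith [hc1])
  have h3term : (0:ℝ) ≤ w ^ 2 + w * a + a ^ 2 - 3 := by
    nlinarith [hw1, ha1, mul_nonneg (sub_nonneg.2 hw1) (sub_nonneg.2 ha1),
      sq_nonneg (w - 1), sq_nonneg (a - 1)]
  have key : (w - a) * 3 ≤ w ^ 3 - a ^ 3 := by
    nlinarith [mul_nonneg (sub_nonneg.2 hwa) h3term]
  have hfin : w - a ≤ ε ^ 3 := by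
    nlinarith [key, hc2, pow_nonneg hε0.le 3]
  have hexpr : w - 1 - 1 / (3 * S ^ 3) + 1 / (9 * S ^ 6) = w - a := by
    rw [hadef, hedef]
    field_simp
    ring
  have hε3 : ε ^ 3 = 1 / S ^ 9 := by rw [hedef]; field_simp
  rw [hexpr]
  exact ⟨by linarith, by linarith [hε3 ▸ hfin]⟩

noncomputable def uu (S : ℝ) : ℝ := (S ^ 3 + 1) ^ ((1 : ℝ) / 3)

theorem uu_cube {S : ℝ} (hS : 0 < S) : uu S ^ 3 = S ^ 3 + 1 := by
  have hP : (0:ℝ) < S ^ 3 + 1 := by positivity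
  rw [uu, ← Real.rpow_natCast ((S^3+1) ^ ((1:ℝ)/3)) 3, ← Real.rpow_mul hP.le]
  norm_num

theorem uu_pos {S : ℝ} (hS : 0 < S) : 0 < uu S :=
  Real.rpow_pos_of_pos (by positivity) _

theorem uu_ge {S : ℝ} (hS : 0 < S) : S ≤ uu S :=
  le_of_pow_le_pow_left₀ (n := 3) (by norm_num) (uu_pos hS).le
    (by rw [uu_cube hS]; linarith)

theorem uu_gt_one {S : ℝ} (hS : 0 < S) : 1 < uu S := by
  have h1 := uu_cube hS
  have h2 := uu_pos hS
  nlinarith [sq_nonneg (uu S + 1), sq_nonneg (uu S - 1), pow_pos hS 3]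

theorem uu_sq {S : ℝ} (hS : 0 < S) : (S ^ 3 + 1) ^ ((2:ℝ)/3) = uu S ^ 2 := by
  have hP : (0:ℝ) < S ^ 3 + 1 := by positivity
  rw [uu, ← Real.rpow_natCast ((S^3+1) ^ ((1:ℝ)/3)) 2, ← Real.rpow_mul hP.le]
  norm_num


theorem hlim : Tendsto (fun S : ℝ => K₃ S - S + 1 / (6 * S ^ 2) - 1 / (45 * S ^ 5))
    atTop (nhds 0) := by
  have hpow : ∀ n : ℕ, n ≠ 0 → Tendsto (fun S : ℝ => 1 / S ^ n) atTop (nhds 0) := by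
    intro n hn
    simpa [one_div, Pi.inv_def] using (tendsto_pow_atTop (α := ℝ) hn).inv_tendsto_atTop
  -- piece 1 : u - S → 0
  have h1 : Tendsto (fun S : ℝ => uu S - S) atTop (nhds 0) := by
    refine squeeze_zero_norm' ?_ (hpow 2 (by norm_num))
    filter_upwards [eventually_ge_atTop (1:ℝ)] with S hS
    have hS0 : 0 < S := lt_of_lt_of_le one_pos hS
    have h1 := uu_cube hS0
    have h2 := uu_ge hS0
    have h3 := uu_pos hS0
    rw [Real.norm_eq_abs, abs_of_nonneg (by linarith), le_div_iff₀ (by positivity)]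
    nlinarith [mul_nonneg (sub_nonneg.2 h2) (show (0:ℝ) ≤ uu S ^ 2 + uu S * S by positivity)]
  -- piece 2 : log part → 0
  have hr : Tendsto (fun S : ℝ => (uu S - 1) ^ 2 / (uu S ^ 2 + uu S + 1)) atTop (nhds 1) := by
    have hd : Tendsto (fun S : ℝ => (uu S - 1) ^ 2 / (uu S ^ 2 + uu S + 1) - 1) atTop (nhds 0) := by
      refine squeeze_zero_norm' (a := fun S : ℝ => 3 * (1 / S ^ 1)) ?_
        (by simpa using (hpow 1 one_ne_zero).const_mul 3)
      filter_upwards [eventually_ge_atTop (1:ℝ)] with S hS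
      have hS0 : 0 < S := lt_of_lt_of_le one_pos hS
      have h2 := uu_ge hS0
      have h3 := uu_gt_one hS0
      have hden : (0:ℝ) < uu S ^ 2 + uu S + 1 := by positivity
      have heq : (uu S - 1) ^ 2 / (uu S ^ 2 + uu S + 1) - 1
          = -(3 * uu S) / (uu S ^ 2 + uu S + 1) := by
        field_simp
        ring
      rw [heq, Real.norm_eq_abs, abs_div, abs_of_nonpos (by nlinarith), abs_of_pos hden,
        neg_neg, pow_one, mul_one_div, div_le_div_iff₀ hden hS0]
      nlinarith [mul_le_mul_of_nonneg_left h2 (by positivity : (0:ℝ) ≤ 3 * uu S), h3]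
    have := hd.add tendsto_const_nhds (f := fun S : ℝ => (uu S - 1) ^ 2 / (uu S ^ 2 + uu S + 1) - 1) (g := fun _ => (1:ℝ))
    simpa using this
  have h2 : Tendsto (fun S : ℝ => 2 * Real.log (uu S - 1) - Real.log (uu S ^ 2 + uu S + 1))
      atTop (nhds 0) := by
    have hlog : Tendsto (fun S : ℝ => Real.log ((uu S - 1) ^ 2 / (uu S ^ 2 + uu S + 1)))
        atTop (nhds 0) := by
      have := (Real.continuousAt_log one_ne_zero).tendsto.comp hr
      simpa [Function.comp_def] using this
    apply hlog.congr'
    filter_upwards [eventually_ge_atTop (1:ℝ)] with S hS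
    have hS0 : 0 < S := lt_of_lt_of_le one_pos hS
    have h3 := uu_gt_one hS0
    have hden : (0:ℝ) < uu S ^ 2 + uu S + 1 := by positivity
    rw [Real.log_div (pow_ne_zero 2 (sub_ne_zero.2 (ne_of_gt h3))) hden.ne', Real.log_pow]
    push_cast
    ring
  -- piece 3 : arctan part
  have h3 : Tendsto (fun S : ℝ => Real.arctan ((2 * uu S + 1) / Real.sqrt 3)) atTop
      (nhds (Real.pi / 2)) := by
    have harg : Tendsto (fun S : ℝ => (2 * uu S + 1) / Real.sqrt 3) atTop atTop := by
      apply tendsto_atTop_mono' atTop _ tendsto_id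
      filter_upwards [eventually_ge_atTop (1:ℝ)] with S hS
      have hS0 : 0 < S := lt_of_lt_of_le one_pos hS
      have h2 := uu_ge hS0
      have hs3 : Real.sqrt 3 ≤ 2 := by
        rw [show (2:ℝ) = Real.sqrt 4 by rw [show (4:ℝ) = 2^2 by norm_num, Real.sqrt_sq]; norm_num]
        exact Real.sqrt_le_sqrt (by norm_num)
      have hs0 : 0 < Real.sqrt 3 := by positivity
      simp only [id_eq]
      rw [le_div_iff₀ hs0]
      nlinarith
    exact (Real.tendsto_arctan_atTop.mono_right nhdsWithin_le_nhds).comp harg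
  -- assemble
  have hmain : Tendsto (fun S : ℝ => (uu S - S)
      + (1/6) * (2 * Real.log (uu S - 1) - Real.log (uu S ^ 2 + uu S + 1))
      + (Real.sqrt 3 / 3) * (Real.pi / 2 - Real.arctan ((2 * uu S + 1) / Real.sqrt 3))
      + 1 / (6 * S ^ 2) - 1 / (45 * S ^ 5)) atTop
      (nhds (0 + (1/6) * 0 + (Real.sqrt 3 / 3) * (Real.pi / 2 - Real.pi / 2) + (1/6) * 0 - (1/45) * 0)) := by
    refine ((((h1.add (h2.const_mul (1/6))).add
      (((tendsto_const_nhds (x := Real.pi / 2)).sub h3).const_mul (Real.sqrt 3 / 3))).add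
      ?_).sub ?_)
    · have := (hpow 2 (by norm_num)).const_mul (1/6)
      apply this.congr
      intro S
      ring
    · have := (hpow 5 (by norm_num)).const_mul (1/45)
      apply this.congr
      intro S
      ring
  rw [show (0:ℝ) + (1/6) * 0 + (Real.sqrt 3 / 3) * (Real.pi / 2 - Real.pi / 2) + (1/6) * 0 - (1/45) * 0 = 0 by ring] at hmain
  apply hmain.congr'
  filter_upwards [eventually_ge_atTop (1:ℝ)] with S hS
  have hS0 : 0 < S := lt_of_lt_of_le one_pos hS
  have hsq := uu_sq hS0
  have hconst : Real.pi / (2 * Real.sqrt 3) = Real.sqrt 3 * Real.pi / 6 := by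
    rw [div_eq_div_iff (by positivity) (by norm_num)]
    linear_combination (-2 * Real.pi) * Real.sq_sqrt (show (0:ℝ) ≤ 3 by norm_num)
  show _ = K₃ S - S + 1 / (6 * S ^ 2) - 1 / (45 * S ^ 5)
  rw [K₃, hsq, hconst, ← uu]
  ring


/-- The function `Σ ↦ K₃(Σ) − Σ + 1/(6Σ²) − 1/(45Σ⁵)` is `O(Σ⁻⁷)` as
`Σ → ∞`:  the asymptotic expansion `K₃(Σ) ≈ Σ − 1/(6Σ²) + 1/(45Σ⁵) + O(Σ⁻⁷)` expresses
that the Ricci-flat metric on `O_{P²}(-3)` is asymptotically flat. -/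
theorem stmt_4 :
    (fun S : ℝ => K₃ S - S + 1 / (6 * S ^ 2) - 1 / (45 * S ^ 5))
      =O[atTop] (fun S : ℝ => S ^ (-7 : ℤ)) := by
  set F : ℝ → ℝ := fun S : ℝ => K₃ S - S + 1 / (6 * S ^ 2) - 1 / (45 * S ^ 5) with hFdef
  set B : ℝ → ℝ := fun S : ℝ => 1 / (8 * S ^ 8) with hBdef
  have hB : ∀ S : ℝ, 0 < S → HasDerivAt B (-(1 / S ^ 9)) S := by
    intro S hS
    have h := ((hasDerivAt_pow 8 S).const_mul 8).inv
      (mul_ne_zero (by norm_num) (pow_ne_zero 8 hS.ne'))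
    rw [hBdef]
    simp only [one_div]
    refine h.congr_deriv ?_
    field_simp
    ring
  have hBlim : Tendsto B atTop (nhds 0) := by
    have := ((tendsto_pow_atTop (α := ℝ) (n := 8) (by norm_num)).inv_tendsto_atTop).const_mul (1/8)
    rw [hBdef]
    simp only [mul_zero] at this
    apply this.congr
    intro S
    simp [Pi.inv_apply]
    ring
  -- F is monotone on [1, ∞)
  have hFmono : MonotoneOn F (Set.Ici 1) := by
    apply monotoneOn_of_deriv_nonneg (convex_Ici 1)
    · intro x hx
      exact (hFderiv x (lt_of_lt_of_le one_pos hx)).continuousAt.continuousWithinAt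
    · intro x hx
      rw [interior_Ici] at hx
      exact (hFderiv x (lt_of_lt_of_le one_pos hx.le)).differentiableAt.differentiableWithinAt
    · intro x hx
      rw [interior_Ici] at hx
      rw [(hFderiv x (lt_of_lt_of_le one_pos hx.le)).deriv]
      exact (hbound x hx.le).1
  -- F + B is antitone on [1, ∞)
  have hHanti : AntitoneOn (fun S => F S + B S) (Set.Ici 1) := by
    apply antitoneOn_of_deriv_nonpos (convex_Ici 1)
    · intro x hx
      exact ((hFderiv x (lt_of_lt_of_le one_pos hx)).add
        (hB x (lt_of_lt_of_le one_pos hx))).continuousAt.continuousWithinAt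
    · intro x hx
      rw [interior_Ici] at hx
      exact ((hFderiv x (lt_of_lt_of_le one_pos hx.le)).add
        (hB x (lt_of_lt_of_le one_pos hx.le))).differentiableAt.differentiableWithinAt
    · intro x hx
      rw [interior_Ici] at hx
      have hx0 : 0 < x := lt_of_lt_of_le one_pos hx.le
      rw [HasDerivAt.deriv (f := fun S => F S + B S) ((hFderiv x hx0).add (hB x hx0))]
      have := (hbound x hx.le).2
      linarith
  rw [isBigO_iff]
  refine ⟨1, ?_⟩
  filter_upwards [eventually_ge_atTop (1:ℝ)] with S hS
  have hS0 : 0 < S := lt_of_lt_of_le one_pos hS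
  -- upper bound : F S ≤ 0
  have hupper : F S ≤ 0 := by
    apply ge_of_tendsto hlim
    filter_upwards [eventually_ge_atTop S] with T hT
    exact hFmono (Set.mem_Ici.2 hS) (Set.mem_Ici.2 (le_trans hS hT)) hT
  -- lower bound : -B S ≤ F S
  have hlower : -B S ≤ F S := by
    have hH0 : 0 ≤ F S + B S := by
      have hHlim : Tendsto (fun T : ℝ => F T + B T) atTop (nhds 0) := by
        have h' := hlim.add hBlim
        rw [add_zero] at h'
        exact h'
      apply le_of_tendsto hHlim
      filter_upwards [eventually_ge_atTop S] with T hT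
      exact hHanti (Set.mem_Ici.2 hS) (Set.mem_Ici.2 (le_trans hS hT)) hT
    linarith
  have hBsmall : B S ≤ S ^ (-7 : ℤ) := by
    rw [hBdef]
    rw [zpow_neg, show ((7:ℤ) = (7:ℕ)) by norm_num, zpow_natCast]
    rw [div_le_iff₀ (by positivity), inv_mul_eq_div, le_div_iff₀ (by positivity)]
    nlinarith [pow_le_pow_right₀ hS (show 7 ≤ 8 by norm_num), pow_pos hS0 7, pow_pos hS0 8]
  rw [Real.norm_eq_abs, Real.norm_eq_abs, abs_of_nonneg (by positivity : (0:ℝ) ≤ S ^ (-7:ℤ)),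
    one_mul, abs_le]
  constructor
  · calc -(S ^ (-7:ℤ)) ≤ -B S := by linarith
    _ ≤ F S := hlower
  · linarith [show (0:ℝ) ≤ S ^ (-7:ℤ) by positivity]
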